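/- If in addition there exists c ∈ (a,b) such that ϕ'(θ) ≤ 0 for all θ ∈ (a,c] and ϕ'(θ) ≥ 0 for all θ ∈ [c,b), then v(θ,θ̃)² ≤ (1/ϕ(c))·(1 + w(θ̃)²) for all θ, θ̃ ∈ (a,b), where w(θ̃) = u_I'(c)·u_II(θ̃) − u_I(θ̃)·u_II'(c). -/

import Mathlib

lemma energy_le_aux (a b c : ℝ) (ϕ ϕd f fd fdd : ℝ → ℝ)
    (hϕd : ∀ θ ∈ Set.Ioo a b, HasDerivAt ϕ (ϕd θ) θ)
    (hϕpos : ∀ θ ∈ Set.Ioo a b, 0 < ϕ θ)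
    (hfd : ∀ θ ∈ Set.Ioo a b, HasDerivAt f (fd θ) θ)
    (hfdd : ∀ θ ∈ Set.Ioo a b, HasDerivAt fd (fdd θ) θ)
    (hode : ∀ θ ∈ Set.Ioo a b, fdd θ + ϕ θ * f θ = 0)
    (hc : c ∈ Set.Ioo a b)
    (hdec : ∀ θ ∈ Set.Ioc a c, ϕd θ ≤ 0)
    (hinc : ∀ θ ∈ Set.Ico c b, 0 ≤ ϕd θ) :
    ∀ θ ∈ Set.Ioo a b, f θ ^ 2 + (fd θ)^2 / ϕ θ ≤ f c ^ 2 + (fd c)^2 / ϕ c := by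
  set E : ℝ → ℝ := fun θ => f θ ^ 2 + (fd θ)^2 / ϕ θ with hE
  have hEd : ∀ θ ∈ Set.Ioo a b, HasDerivAt E (-(fd θ)^2 * ϕd θ / (ϕ θ)^2) θ := by
    intro θ hθ
    have hϕne : ϕ θ ≠ 0 := (hϕpos θ hθ).ne'
    have h1 := (hfd θ hθ).pow 2
    have h2 := ((hfdd θ hθ).pow 2).div (hϕd θ hθ) hϕne
    have h3 := h1.add h2
    convert h3 using 1
    any_goals rfl
    have h4 : fdd θ = -(ϕ θ * f θ) := by linarith [hode θ hθ]
    rw [h4]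
    simp only [Pi.pow_apply]
    field_simp
    ring
  intro θ hθ
  rcases le_or_gt θ c with h | h
  · have hsub : Set.Icc θ c ⊆ Set.Ioo a b :=
      Set.Icc_subset_Ioo hθ.1 hc.2
    have hmono : MonotoneOn E (Set.Icc θ c) := by
      apply monotoneOn_of_deriv_nonneg (convex_Icc _ _)
      · exact fun x hx => ((hEd x (hsub hx)).differentiableAt.continuousAt).continuousWithinAt
      · intro x hx
        rw [interior_Icc] at hx
        exact ((hEd x (hsub (Set.Ioo_subset_Icc_self hx))).differentiableAt).differentiableWithinAt
      · intro x hx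
        rw [interior_Icc] at hx
        have hxab : x ∈ Set.Ioo a b := hsub (Set.Ioo_subset_Icc_self hx)
        rw [(hEd x hxab).deriv]
        have hφd : ϕd x ≤ 0 := hdec x ⟨hxab.1, hx.2.le⟩
        have h1 : 0 ≤ -(fd x)^2 * ϕd x := by nlinarith [sq_nonneg (fd x)]
        exact div_nonneg h1 (sq_nonneg _)
    exact hmono ⟨le_refl _, h⟩ ⟨h, le_refl _⟩ h
  · have hsub : Set.Icc c θ ⊆ Set.Ioo a b :=
      Set.Icc_subset_Ioo hc.1 hθ.2
    have hanti : AntitoneOn E (Set.Icc c θ) := by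
      apply antitoneOn_of_deriv_nonpos (convex_Icc _ _)
      · exact fun x hx => ((hEd x (hsub hx)).differentiableAt.continuousAt).continuousWithinAt
      · intro x hx
        rw [interior_Icc] at hx
        exact ((hEd x (hsub (Set.Ioo_subset_Icc_self hx))).differentiableAt).differentiableWithinAt
      · intro x hx
        rw [interior_Icc] at hx
        have hxab : x ∈ Set.Ioo a b := hsub (Set.Ioo_subset_Icc_self hx)
        rw [(hEd x hxab).deriv]
        have hφd : 0 ≤ ϕd x := hinc x ⟨hx.1.le, hxab.2⟩
        have h1 : -(fd x)^2 * ϕd x ≤ 0 := by nlinarith [sq_nonneg (fd x)]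
        exact div_nonpos_of_nonpos_of_nonneg h1 (sq_nonneg _)
    exact hanti ⟨le_refl _, h.le⟩ ⟨h.le, le_refl _⟩ h.le

/-- v(θ,θ̃)² ≤ (1/ϕ(c))·(1 + w(θ̃)²) for all θ, θ̃ ∈ (a,b). -/
theorem stmt_9 (a b : ℝ) (hab : a < b)
    (ϕ ϕd uI uId uIdd uII uIId uIIdd : ℝ → ℝ)
    (hϕd : ∀ θ ∈ Set.Ioo a b, HasDerivAt ϕ (ϕd θ) θ)
    (hϕdc : ContinuousOn ϕd (Set.Ioo a b))
    (hϕpos : ∀ θ ∈ Set.Ioo a b, 0 < ϕ θ)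
    (huId : ∀ θ ∈ Set.Ioo a b, HasDerivAt uI (uId θ) θ)
    (huIdd : ∀ θ ∈ Set.Ioo a b, HasDerivAt uId (uIdd θ) θ)
    (huIId : ∀ θ ∈ Set.Ioo a b, HasDerivAt uII (uIId θ) θ)
    (huIIdd : ∀ θ ∈ Set.Ioo a b, HasDerivAt uIId (uIIdd θ) θ)
    (hodeI : ∀ θ ∈ Set.Ioo a b, uIdd θ + ϕ θ * uI θ = 0)
    (hodeII : ∀ θ ∈ Set.Ioo a b, uIIdd θ + ϕ θ * uII θ = 0)
    (hW : ∀ θ ∈ Set.Ioo a b, uI θ * uIId θ - uId θ * uII θ = 1)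
    (c : ℝ) (hc : c ∈ Set.Ioo a b)
    (hdec : ∀ θ ∈ Set.Ioc a c, ϕd θ ≤ 0)
    (hinc : ∀ θ ∈ Set.Ico c b, 0 ≤ ϕd θ) :
    ∀ θ ∈ Set.Ioo a b, ∀ θt ∈ Set.Ioo a b,
      (uI θ * uII θt - uI θt * uII θ) ^ 2 ≤
        (1 / ϕ c) * (1 + (uId c * uII θt - uI θt * uIId c) ^ 2) := by
  intro θ hθ θt hθt
  have hφc := hϕpos c hc
  -- first application: f(s) = v(s, θt)
  have h1 := energy_le_aux a b c ϕ ϕd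
      (fun s => uI s * uII θt - uI θt * uII s)
      (fun s => uId s * uII θt - uI θt * uIId s)
      (fun s => uIdd s * uII θt - uI θt * uIIdd s)
      hϕd hϕpos
      (fun s hs => ((huId s hs).mul_const (uII θt)).sub ((huIId s hs).const_mul (uI θt)))
      (fun s hs => ((huIdd s hs).mul_const (uII θt)).sub ((huIIdd s hs).const_mul (uI θt)))
      (fun s hs => by linear_combination uII θt * (hodeI s hs) - uI θt * (hodeII s hs))
      hc hdec hinc θ hθ
  -- second application: g(s) = v(c, s)
  have h2 := energy_le_aux a b c ϕ ϕd
      (fun s => uI c * uII s - uI s * uII c)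
      (fun s => uI c * uIId s - uId s * uII c)
      (fun s => uI c * uIIdd s - uIdd s * uII c)
      hϕd hϕpos
      (fun s hs => ((huIId s hs).const_mul (uI c)).sub ((huId s hs).mul_const (uII c)))
      (fun s hs => ((huIIdd s hs).const_mul (uI c)).sub ((huIdd s hs).mul_const (uII c)))
      (fun s hs => by linear_combination uI c * (hodeII s hs) - uII c * (hodeI s hs))
      hc hdec hinc θt hθt
  have hWc : uI c * uIId c - uId c * uII c = 1 := hW c hc
  rw [hWc] at h2
  have hA : 0 ≤ (uId θ * uII θt - uI θt * uIId θ) ^ 2 / ϕ θ :=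
    div_nonneg (sq_nonneg _) (hϕpos θ hθ).le
  have hB : 0 ≤ (uI c * uIId θt - uId θt * uII c) ^ 2 / ϕ θt :=
    div_nonneg (sq_nonneg _) (hϕpos θt hθt).le
  have hg2 : (uI c * uII θt - uI θt * uII c) ^ 2 ≤ 1 / ϕ c := by
    have hz : (uI c * uII c - uI c * uII c) ^ 2 = 0 := by ring
    rw [hz] at h2
    norm_num at h2
    rw [one_div]
    linarith
  have hrw : (1 / ϕ c) * (1 + (uId c * uII θt - uI θt * uIId c) ^ 2)
      = 1 / ϕ c + (uId c * uII θt - uI θt * uIId c) ^ 2 / ϕ c := by ring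
  rw [hrw]
  linarith
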